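/- For every simple transposition s_i = (i,i+1) and every w ∈ S_n: if ℓ(s_i w) < ℓ(w) then s_i · p_w = p_w − (t_i − t_{i+1}) p_{s_i w}, and if ℓ(s_i w) > ℓ(w) then s_i · p_w = p_w. -/

import Mathlib

open MvPolynomial Equiv Finset

noncomputable section

/-- The polynomial ring ℂ[t₁,…,tₙ]. -/
abbrev Pol (n : ℕ) : Type := MvPolynomial (Fin n) ℂ

/-- The action of a permutation `w` on polynomials by the substitution `tᵢ ↦ t_{w(i)}`. -/
def pact {n : ℕ} (w : Perm (Fin n)) (f : Pol n) : Pol n := rename ⇑w f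

/-- The GKM condition defining `R ⊆ ∏_{v ∈ Sₙ} ℂ[t₁,…,tₙ]`: for every `v` and every
transposition `(i j)` with `i < j`, the difference `p(v) − p((i j)v)` is divisible by
`tᵢ − tⱼ`. -/
def GKM (n : ℕ) (p : Perm (Fin n) → Pol n) : Prop :=
  ∀ (v : Perm (Fin n)) (i j : Fin n), i < j →
    (X i - X j : Pol n) ∣ (p v - p (Equiv.swap i j * v))

/-- The length of a permutation: its number of inversions. -/
def len {n : ℕ} (w : Perm (Fin n)) : ℕ :=
  (Finset.univ.filter fun q : Fin n × Fin n => q.1 < q.2 ∧ w q.2 < w q.1).card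

/-- Bruhat order: the partial order generated by `u < (i j) u` whenever `ℓ(u) < ℓ((i j)u)`. -/
def bruhatLE {n : ℕ} : Perm (Fin n) → Perm (Fin n) → Prop :=
  Relation.ReflTransGen
    (fun u v => (∃ i j : Fin n, i < j ∧ v = Equiv.swap i j * u) ∧ len u < len v)

/-- `p` is the canonical class (equivariant Schubert class) of `w`:
(i) each component is homogeneous of degree `ℓ(w)`; (ii) `p(v) = 0` unless `v ≥ w` in
Bruhat order; (iii) `p(w) = ∏ (tᵢ − tⱼ)` over pairs `i < j` with `ℓ((i j)w) < ℓ(w)`;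
and `p` satisfies the GKM conditions. -/
def IsCanonical {n : ℕ} (w : Perm (Fin n)) (p : Perm (Fin n) → Pol n) : Prop :=
  GKM n p ∧
  (∀ v, (p v).IsHomogeneous (len w)) ∧
  (∀ v, ¬ bruhatLE w v → p v = 0) ∧
  p w = ∏ q ∈ Finset.univ.filter
      (fun q : Fin n × Fin n => q.1 < q.2 ∧ len (Equiv.swap q.1 q.2 * w) < len w),
      (X q.1 - X q.2 : Pol n)

/-- The simple transposition `sᵢ = (i, i+1)`. -/
def sT (n i : ℕ) (h : i + 1 < n) : Perm (Fin n) :=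
  Equiv.swap ⟨i, Nat.lt_of_succ_lt h⟩ ⟨i + 1, h⟩

/-- The dot (left) action: `(w·p)(v) = w(p(w⁻¹ v))`. -/
def dot {n : ℕ} (w : Perm (Fin n)) (p : Perm (Fin n) → Pol n) : Perm (Fin n) → Pol n :=
  fun v => pact w (p (w⁻¹ * v))

/-- The star (right) action: `(p * w)(v) = p(vw)`. -/
def starAct {n : ℕ} (p : Perm (Fin n) → Pol n) (w : Perm (Fin n)) :
    Perm (Fin n) → Pol n :=
  fun v => p (v * w)

/-- `R` as a `ℂ[t₁,…,tₙ]`-submodule of the product. -/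
def gkmSubmodule (n : ℕ) : Submodule (Pol n) (Perm (Fin n) → Pol n) where
  carrier := {p | GKM n p}
  add_mem' := by
    intro a b ha hb v i j hij
    have h := dvd_add (ha v i j hij) (hb v i j hij)
    simpa [Pi.add_apply, add_sub_add_comm] using h
  zero_mem' := by
    intro v i j hij
    simp
  smul_mem' := by
    intro c p hp v i j hij
    have h := (hp v i j hij).mul_left c
    simpa [Pi.smul_apply, smul_eq_mul, mul_sub] using h

/-- The maximal ideal `𝔪 = (t₁,…,tₙ) ⊆ ℂ[t₁,…,tₙ]`. -/
def mIdeal (n : ℕ) : Ideal (Pol n) := Ideal.span (Set.range (X : Fin n → Pol n))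

/-- The submodule `𝔪R`: finite sums of products `c • p` with `c ∈ 𝔪` and `p ∈ R`. -/
def mR (n : ℕ) : Submodule (Pol n) (Perm (Fin n) → Pol n) :=
  Submodule.span (Pol n) {q | ∃ c ∈ mIdeal n, ∃ p, GKM n p ∧ q = c • p}

section Combi
variable {n : ℕ}

def invSet (w : Perm (Fin n)) : Finset (Fin n × Fin n) :=
  Finset.univ.filter fun q : Fin n × Fin n => q.1 < q.2 ∧ w q.2 < w q.1

lemma len_eq_card (w : Perm (Fin n)) : len w = (invSet w).card := rfl

lemma mem_invSet {w : Perm (Fin n)} {q : Fin n × Fin n} :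
    q ∈ invSet w ↔ q.1 < q.2 ∧ w q.2 < w q.1 := by simp [invSet]

lemma len_inv_eq (w : Perm (Fin n)) : len w⁻¹ = len w := by
  rw [len_eq_card, len_eq_card]
  apply Finset.card_bij' (fun q _ => ((w⁻¹ q.2 : Fin n), (w⁻¹ q.1 : Fin n)))
    (fun q _ => ((w q.2 : Fin n), (w q.1 : Fin n)))
  · intro q hq
    rw [mem_invSet] at hq ⊢
    refine ⟨hq.2, by simpa using hq.1⟩
  · intro q hq
    rw [mem_invSet] at hq ⊢
    refine ⟨hq.2, by simpa using hq.1⟩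
  · intro q hq; simp
  · intro q hq; simp

lemma swap_val {x y : Fin n} (c : Fin n) :
    ((Equiv.swap x y) c : ℕ)
      = if (c:ℕ) = (x:ℕ) then (y:ℕ) else if (c:ℕ) = (y:ℕ) then (x:ℕ) else (c:ℕ) := by
  by_cases h1 : c = x
  · subst h1
    simp [Equiv.swap_apply_left]
  · by_cases h2 : c = y
    · subst h2
      have hxy : (c:ℕ) ≠ (x:ℕ) := fun h => h1 (Fin.ext h)
      simp [Equiv.swap_apply_right, hxy]
    · have hx : (c:ℕ) ≠ (x:ℕ) := fun h => h1 (Fin.ext h)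
      have hy : (c:ℕ) ≠ (y:ℕ) := fun h => h2 (Fin.ext h)
      simp [Equiv.swap_apply_of_ne_of_ne h1 h2, hx, hy]

/-- An adjacent transposition preserves the order of any other pair. -/
lemma adj_swap_lt {x y a b : Fin n} (hadj : (y : ℕ) = (x : ℕ) + 1) (hab : a < b)
    (hne : (a, b) ≠ (x, y)) : Equiv.swap x y a < Equiv.swap x y b := by
  have hne' : ¬((a:ℕ) = (x:ℕ) ∧ (b:ℕ) = (y:ℕ)) := by
    rintro ⟨h1, h2⟩
    exact hne (Prod.ext (Fin.ext h1) (Fin.ext h2))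
  rw [Fin.lt_def] at hab ⊢
  rw [swap_val, swap_val]
  split_ifs <;> omega

/-- Right multiplication by an adjacent transposition: ascent case. -/
lemma len_mul_adj_of_lt {u : Perm (Fin n)} {x y : Fin n} (hadj : (y : ℕ) = (x : ℕ) + 1)
    (hlt : u x < u y) : len (u * Equiv.swap x y) = len u + 1 := by
  classical
  have hxy : x < y := by rw [Fin.lt_def]; omega
  set s := Equiv.swap x y with hs
  -- (x,y) is an inversion of u*s but not of u
  have hmem : (x, y) ∈ invSet (u * s) := by
    rw [mem_invSet]
    refine ⟨hxy, ?_⟩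
    simp only [Perm.mul_apply, hs, Equiv.swap_apply_left, Equiv.swap_apply_right]
    exact hlt
  have hnotmem : (x, y) ∉ invSet u := by
    rw [mem_invSet]; push_neg; intro _; exact le_of_lt hlt
  -- bijection between the two erased sets
  have hcard : ((invSet (u * s)).erase (x, y)).card = ((invSet u).erase (x, y)).card := by
    apply Finset.card_bij' (fun q _ => ((s q.1 : Fin n), (s q.2 : Fin n)))
      (fun q _ => ((s q.1 : Fin n), (s q.2 : Fin n)))
    · intro q hq
      rw [Finset.mem_erase, mem_invSet] at hq
      obtain ⟨hne, h12, hv⟩ := hq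
      rw [Finset.mem_erase, mem_invSet]
      have hlt' : s q.1 < s q.2 := adj_swap_lt hadj h12 (by simpa [Prod.ext_iff] using hne)
      refine ⟨?_, hlt', ?_⟩
      · intro h
        rw [Prod.ext_iff] at h
        have h1 : q.1 = y := by
          have := congrArg (⇑s) h.1
          simpa [hs, Equiv.swap_apply_self, Equiv.swap_apply_left] using this
        have h2 : q.2 = x := by
          have := congrArg (⇑s) h.2
          simpa [hs, Equiv.swap_apply_self, Equiv.swap_apply_right] using this
        rw [h1, h2] at h12
        exact absurd h12 (not_lt.2 (le_of_lt hxy))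
      · simpa [Perm.mul_apply] using hv
    · intro q hq
      rw [Finset.mem_erase, mem_invSet] at hq
      obtain ⟨hne, h12, hv⟩ := hq
      rw [Finset.mem_erase, mem_invSet]
      have hlt' : s q.1 < s q.2 := adj_swap_lt hadj h12 (by simpa [Prod.ext_iff] using hne)
      refine ⟨?_, hlt', ?_⟩
      · intro h
        rw [Prod.ext_iff] at h
        have h1 : q.1 = y := by
          have := congrArg (⇑s) h.1
          simpa [hs, Equiv.swap_apply_self, Equiv.swap_apply_left] using this
        have h2 : q.2 = x := by
          have := congrArg (⇑s) h.2
          simpa [hs, Equiv.swap_apply_self, Equiv.swap_apply_right] using this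
        rw [h1, h2] at h12
        exact absurd h12 (not_lt.2 (le_of_lt hxy))
      · simpa [Perm.mul_apply, hs, Equiv.swap_apply_self] using hv
    · intro q hq; simp [hs]
    · intro q hq; simp [hs]
  have e1 : (invSet (u * s)).card = ((invSet (u*s)).erase (x,y)).card + 1 :=
    (Finset.card_erase_add_one hmem).symm
  have e2 : ((invSet u).erase (x,y)).card = (invSet u).card := by
    rw [Finset.erase_eq_of_notMem hnotmem]
  rw [len_eq_card, len_eq_card, e1, hcard, e2]

/-- Right multiplication by an adjacent transposition: descent case. -/
lemma len_mul_adj_of_gt {u : Perm (Fin n)} {x y : Fin n} (hadj : (y : ℕ) = (x : ℕ) + 1)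
    (hlt : u y < u x) : len u = len (u * Equiv.swap x y) + 1 := by
  have h1 : (u * Equiv.swap x y) x < (u * Equiv.swap x y) y := by
    simp only [Perm.mul_apply, Equiv.swap_apply_left, Equiv.swap_apply_right]
    exact hlt
  have := len_mul_adj_of_lt hadj h1
  rwa [mul_swap_mul_self] at this

lemma len_mul_adj_le (u : Perm (Fin n)) {x y : Fin n} (hadj : (y : ℕ) = (x : ℕ) + 1) :
    len (u * Equiv.swap x y) ≤ len u + 1 := by
  have hne : u x ≠ u y := by
    intro h
    have := u.injective h
    subst this; omega
  rcases lt_or_gt_of_ne hne with h | h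
  · exact (len_mul_adj_of_lt hadj h).le
  · have := len_mul_adj_of_gt hadj h; omega

/-- Key lemma: right multiplying by `swap x y` with `x < y` and `u y < u x` decreases length. -/
lemma len_mul_swap_lt {u : Perm (Fin n)} {x y : Fin n} (hxy : x < y) (hval : u y < u x) :
    len (u * Equiv.swap x y) < len u := by
  classical
  -- strong induction on y - x
  generalize hk : (y : ℕ) - (x : ℕ) = k
  induction k using Nat.strong_induction_on generalizing u x y with
  | _ k IH =>
    rw [Fin.lt_def] at hxy
    by_cases hadj : (y : ℕ) = (x : ℕ) + 1
    · have := len_mul_adj_of_gt hadj hval; omega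
    · -- y - x ≥ 2; r := y - 1
      have hy2 : (x : ℕ) + 1 < (y : ℕ) := by omega
      set r : Fin n := ⟨(y : ℕ) - 1, by omega⟩ with hr
      have hxr : x < r := by rw [Fin.lt_def]; simp [hr]; omega
      have hry : (y : ℕ) = (r : ℕ) + 1 := by simp [hr]; omega
      have hxyne : x ≠ y := by intro h; rw [h] at hxy; omega
      have hxrne : x ≠ r := ne_of_lt hxr
      -- swap x y = swap r y * swap x r * swap r y
      have hswap : Equiv.swap x y = Equiv.swap r y * Equiv.swap x r * Equiv.swap r y := by
        rw [Equiv.swap_mul_swap_mul_swap hxrne hxyne, Equiv.swap_comm]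
      have hassoc : u * Equiv.swap x y
          = ((u * Equiv.swap r y) * Equiv.swap x r) * Equiv.swap r y := by
        rw [hswap]; group
      set u1 := u * Equiv.swap r y with hu1
      have hu1x : u1 x = u x := by
        rw [hu1]
        simp only [Perm.mul_apply]
        rw [Equiv.swap_apply_of_ne_of_ne hxrne hxyne]
      have hu1r : u1 r = u y := by
        rw [hu1]; simp only [Perm.mul_apply, Equiv.swap_apply_left]
      have hu1y : u1 y = u r := by
        rw [hu1]; simp only [Perm.mul_apply, Equiv.swap_apply_right]
      have hry' : r ≠ y := by intro h; rw [h] at hry; omega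
      have hury : u r ≠ u y := fun h => hry' (u.injective h)
      set u2 := u1 * Equiv.swap x r with hu2
      have hu2r : u2 r = u1 x := by
        rw [hu2]; simp only [Perm.mul_apply, Equiv.swap_apply_right]
      have hu2y : u2 y = u1 y := by
        rw [hu2]
        simp only [Perm.mul_apply]
        rw [Equiv.swap_apply_of_ne_of_ne (Ne.symm hxyne) (Ne.symm hry')]
      have hIH : len u2 < len u1 := by
        apply IH ((r:ℕ) - (x:ℕ)) (by omega) hxr _ (by rfl)
        rw [hu1x, hu1r]; exact hval
      rcases lt_or_gt_of_ne hury with hc | hc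
      · -- u r < u y : first step goes up
        have h1 : len u1 = len u + 1 := len_mul_adj_of_lt hry (by rw [Fin.lt_def] at hc ⊢; exact hc)
        -- last step goes down: u2 y = u r < u x = u2 r
        have h3 : len u2 = len (u2 * Equiv.swap r y) + 1 := by
          apply len_mul_adj_of_gt hry
          rw [hu2y, hu2r, hu1x, hu1y]
          exact lt_trans hc hval
        rw [hassoc]
        omega
      · -- u y < u r : first step goes down
        have h1 : len u = len u1 + 1 := len_mul_adj_of_gt hry hc
        have h3 : len (u2 * Equiv.swap r y) ≤ len u2 + 1 := len_mul_adj_le u2 hry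
        rw [hassoc]
        omega

lemma len_mul_swap_lt_iff {u : Perm (Fin n)} {x y : Fin n} (hxy : x < y) :
    len (u * Equiv.swap x y) < len u ↔ u y < u x := by
  constructor
  · intro h
    by_contra hc
    push_neg at hc
    have hne : u x ≠ u y := fun hh => (ne_of_lt hxy) (u.injective hh)
    have hlt : u x < u y := lt_of_le_of_ne hc hne
    have h2 : len (u * Equiv.swap x y * Equiv.swap x y) < len (u * Equiv.swap x y) := by
      apply len_mul_swap_lt hxy
      simp only [Perm.mul_apply, Equiv.swap_apply_left, Equiv.swap_apply_right]
      exact hlt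
    rw [mul_swap_mul_self] at h2
    omega
  · exact len_mul_swap_lt hxy

/-- Left versions. -/
lemma len_swap_mul_eq_inv (a b : Fin n) (v : Perm (Fin n)) :
    len (Equiv.swap a b * v) = len (v⁻¹ * Equiv.swap a b) := by
  rw [← len_inv_eq (Equiv.swap a b * v), mul_inv_rev, Equiv.swap_inv]

lemma len_swap_mul_lt_iff {v : Perm (Fin n)} {a b : Fin n} (hab : a < b) :
    len (Equiv.swap a b * v) < len v ↔ v⁻¹ b < v⁻¹ a := by
  rw [len_swap_mul_eq_inv]
  conv_rhs => rw [show v⁻¹ b = v⁻¹ b from rfl]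
  rw [show len v = len v⁻¹ from (len_inv_eq v).symm]
  exact len_mul_swap_lt_iff hab

lemma len_swap_mul_ne {v : Perm (Fin n)} {a b : Fin n} (hab : a < b) :
    len (Equiv.swap a b * v) ≠ len v := by
  have hne : v⁻¹ a ≠ v⁻¹ b := fun h => (ne_of_lt hab) (v⁻¹.injective h)
  rcases lt_or_gt_of_ne hne with h | h
  · -- v⁻¹ a < v⁻¹ b : length increases
    have : len (Equiv.swap a b * (Equiv.swap a b * v)) < len (Equiv.swap a b * v) := by
      rw [len_swap_mul_lt_iff hab]
      simp only [mul_inv_rev, Equiv.swap_inv, Perm.mul_apply]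
      rw [Equiv.swap_apply_right, Equiv.swap_apply_left]
      exact h
    rw [swap_mul_self_mul] at this
    omega
  · have := (len_swap_mul_lt_iff hab).2 h
    omega

lemma len_swap_mul_gt_iff {v : Perm (Fin n)} {a b : Fin n} (hab : a < b) :
    len v < len (Equiv.swap a b * v) ↔ v⁻¹ a < v⁻¹ b := by
  constructor
  · intro h
    have hne : v⁻¹ a ≠ v⁻¹ b := fun hh => (ne_of_lt hab) (v⁻¹.injective hh)
    rcases lt_or_gt_of_ne hne with h' | h'
    · exact h'
    · have := (len_swap_mul_lt_iff hab).2 h'; omega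
  · intro h
    have h2 : len (Equiv.swap a b * (Equiv.swap a b * v)) < len (Equiv.swap a b * v) := by
      rw [len_swap_mul_lt_iff hab]
      simp only [mul_inv_rev, Equiv.swap_inv, Perm.mul_apply]
      rw [Equiv.swap_apply_right, Equiv.swap_apply_left]
      exact h
    rw [swap_mul_self_mul] at h2
    exact h2

/-- Exact step for adjacent (simple) transpositions, left mult, descent case. -/
lemma len_adj_swap_mul_of_gt {v : Perm (Fin n)} {x y : Fin n} (hadj : (y : ℕ) = (x : ℕ) + 1)
    (h : v⁻¹ y < v⁻¹ x) : len v = len (Equiv.swap x y * v) + 1 := by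
  rw [len_swap_mul_eq_inv, show len v = len v⁻¹ from (len_inv_eq v).symm]
  exact len_mul_adj_of_gt hadj h

/-- The number of transpositions decreasing the length of `v` equals `len v`. -/
lemma card_inversion_transpositions (v : Perm (Fin n)) :
    (Finset.univ.filter fun q : Fin n × Fin n =>
      q.1 < q.2 ∧ len (Equiv.swap q.1 q.2 * v) < len v).card = len v := by
  have : (Finset.univ.filter fun q : Fin n × Fin n =>
      q.1 < q.2 ∧ len (Equiv.swap q.1 q.2 * v) < len v) = invSet v⁻¹ := by
    apply Finset.filter_congr
    intro q _
    constructor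
    · rintro ⟨h1, h2⟩; exact ⟨h1, (len_swap_mul_lt_iff h1).1 h2⟩
    · rintro ⟨h1, h2⟩; exact ⟨h1, (len_swap_mul_lt_iff h1).2 h2⟩
  rw [this, ← len_eq_card, len_inv_eq]

end Combi
section Rk
variable {n : ℕ}

/-- rank function: number of positions `x < a` with value `≥ b`. -/
def rk (v : Perm (Fin n)) (a b : ℕ) : ℕ :=
  (Finset.univ.filter fun x : Fin n => (x : ℕ) < a ∧ b ≤ ((v x : Fin n) : ℕ)).card

/-- count of positions in `[a, A)` with value `≥ b`. -/
def cnt (v : Perm (Fin n)) (a A b : ℕ) : ℕ :=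
  (Finset.univ.filter fun x : Fin n =>
    a ≤ (x : ℕ) ∧ (x : ℕ) < A ∧ b ≤ ((v x : Fin n) : ℕ)).card

lemma rk_split (v : Perm (Fin n)) {a A : ℕ} (h : a ≤ A) (b : ℕ) :
    rk v A b = rk v a b + cnt v a A b := by
  rw [rk, rk, cnt, Finset.card_filter, Finset.card_filter, Finset.card_filter,
    ← Finset.sum_add_distrib]
  apply Finset.sum_congr rfl
  intro x _
  split_ifs <;> omega

lemma rk_succ (v : Perm (Fin n)) (a : Fin n) (b : ℕ) :
    rk v ((a : ℕ) + 1) b = rk v (a : ℕ) b + (if b ≤ ((v a : Fin n) : ℕ) then 1 else 0) := by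
  rw [rk_split v (Nat.le_succ (a : ℕ)) b]
  congr 1
  rw [cnt]
  by_cases hb : b ≤ ((v a : Fin n) : ℕ)
  · rw [if_pos hb]
    rw [Finset.card_eq_one]
    refine ⟨a, ?_⟩
    ext x
    simp only [Finset.mem_filter, Finset.mem_univ, true_and, Finset.mem_singleton]
    constructor
    · rintro ⟨h1, h2, _⟩; exact Fin.ext (by omega)
    · rintro rfl; exact ⟨le_refl _, by omega, hb⟩
  · rw [if_neg hb, Finset.card_eq_zero]
    rw [Finset.filter_eq_empty_iff]
    rintro x _ ⟨h1, h2, h3⟩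
    have : x = a := Fin.ext (by omega)
    subst this
    exact hb h3

lemma rk_prefix {u v : Perm (Fin n)} {a : ℕ} (h : ∀ x : Fin n, (x : ℕ) < a → u x = v x)
    (b : ℕ) : rk u a b = rk v a b := by
  rw [rk, rk]
  congr 1
  apply Finset.filter_congr
  intro x _
  constructor
  · rintro ⟨h1, h2⟩; exact ⟨h1, (h x h1) ▸ h2⟩
  · rintro ⟨h1, h2⟩; exact ⟨h1, (h x h1).symm ▸ h2⟩

lemma cnt_congr {u : Perm (Fin n)} {a A b b' : ℕ}
    (h : ∀ x : Fin n, a ≤ (x : ℕ) → (x : ℕ) < A →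
      (b ≤ ((u x : Fin n) : ℕ) ↔ b' ≤ ((u x : Fin n) : ℕ))) :
    cnt u a A b = cnt u a A b' := by
  rw [cnt, cnt]
  congr 1
  apply Finset.filter_congr
  intro x _
  constructor
  · rintro ⟨h1, h2, h3⟩; exact ⟨h1, h2, (h x h1 h2).1 h3⟩
  · rintro ⟨h1, h2, h3⟩; exact ⟨h1, h2, (h x h1 h2).2 h3⟩

lemma cnt_anti {u : Perm (Fin n)} {a A b b' : ℕ} (h : b ≤ b') :
    cnt u a A b' ≤ cnt u a A b := by
  apply Finset.card_le_card
  intro x hx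
  simp only [cnt, Finset.mem_filter, Finset.mem_univ, true_and] at hx ⊢
  exact ⟨hx.1, hx.2.1, le_trans h hx.2.2⟩

/-- column relation: `rk v A b = rk v A (b+1) + [pos of value b < A]`. -/
lemma rk_col (v : Perm (Fin n)) (A : ℕ) (b : Fin n) :
    rk v A (b : ℕ) = rk v A ((b : ℕ) + 1) + (if ((v⁻¹ b : Fin n) : ℕ) < A then 1 else 0) := by
  have hsplit : rk v A (b : ℕ) = rk v A ((b : ℕ) + 1)
      + (Finset.univ.filter fun x : Fin n =>
          (x : ℕ) < A ∧ ((v x : Fin n) : ℕ) = (b : ℕ)).card := by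
    rw [rk, rk, Finset.card_filter, Finset.card_filter, Finset.card_filter,
      ← Finset.sum_add_distrib]
    apply Finset.sum_congr rfl
    intro x _
    split_ifs <;> omega
  rw [hsplit]
  congr 1
  have hiff : ∀ x : Fin n, (((v x : Fin n) : ℕ) = (b : ℕ)) ↔ x = v⁻¹ b := by
    intro x
    constructor
    · intro h
      have : v x = b := Fin.ext h
      rw [← this]; simp
    · rintro rfl; simp
  by_cases hA : ((v⁻¹ b : Fin n) : ℕ) < A
  · rw [if_pos hA, Finset.card_eq_one]
    refine ⟨v⁻¹ b, ?_⟩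
    ext x
    simp only [Finset.mem_filter, Finset.mem_univ, true_and, Finset.mem_singleton]
    constructor
    · rintro ⟨h1, h2⟩; exact (hiff x).1 h2
    · rintro rfl; exact ⟨hA, (hiff _).2 rfl⟩
  · rw [if_neg hA, Finset.card_eq_zero, Finset.filter_eq_empty_iff]
    rintro x _ ⟨h1, h2⟩
    have := (hiff x).1 h2
    subst this
    exact hA h1

/-- helper: sums of functions agreeing off two points. -/
lemma sum_two_points {f g : Fin n → ℕ} {x₀ x₁ : Fin n} (hne : x₀ ≠ x₁)
    (hoff : ∀ x, x ≠ x₀ → x ≠ x₁ → f x = g x) :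
    ∑ x, f x + (g x₀ + g x₁) = ∑ x, g x + (f x₀ + f x₁) := by
  classical
  have h1 : ∀ h : Fin n → ℕ, ∑ x, h x
      = ∑ x ∈ (Finset.univ.erase x₀).erase x₁, h x + (h x₀ + h x₁) := by
    intro h
    have e1 : ∑ x ∈ Finset.univ.erase x₀, h x + h x₀ = ∑ x, h x :=
      Finset.sum_erase_add _ _ (Finset.mem_univ x₀)
    have e2 : ∑ x ∈ (Finset.univ.erase x₀).erase x₁, h x + h x₁
        = ∑ x ∈ Finset.univ.erase x₀, h x :=
      Finset.sum_erase_add _ _ (Finset.mem_erase.2 ⟨Ne.symm hne, Finset.mem_univ x₁⟩)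
    omega
  rw [h1 f, h1 g]
  have : ∑ x ∈ (Finset.univ.erase x₀).erase x₁, f x
      = ∑ x ∈ (Finset.univ.erase x₀).erase x₁, g x := by
    apply Finset.sum_congr rfl
    intro x hx
    rw [Finset.mem_erase, Finset.mem_erase] at hx
    exact hoff x hx.2.1 hx.1
  omega

/-- The bump formula for the rank function under a length-increasing transposition. -/
lemma rk_swap_mul (u : Perm (Fin n)) {c d : Fin n} (hcd : c < d) (hpos : u⁻¹ c < u⁻¹ d)
    (A B : ℕ) :
    rk (Equiv.swap c d * u) A B = rk u A B +
      (if ((u⁻¹ c : Fin n) : ℕ) < A ∧ A ≤ ((u⁻¹ d : Fin n) : ℕ)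
          ∧ (c : ℕ) < B ∧ B ≤ (d : ℕ) then 1 else 0) := by
  classical
  set x₀ := u⁻¹ c with hx₀
  set x₁ := u⁻¹ d with hx₁
  have hne : x₀ ≠ x₁ := by
    intro h
    exact (ne_of_lt hcd) (by simpa [hx₀, hx₁] using congrArg u h)
  set f : Fin n → ℕ := fun x =>
    if (x : ℕ) < A ∧ B ≤ (((Equiv.swap c d * u) x : Fin n) : ℕ) then 1 else 0 with hf
  set g : Fin n → ℕ := fun x => if (x : ℕ) < A ∧ B ≤ ((u x : Fin n) : ℕ) then 1 else 0 with hg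
  have hoff : ∀ x, x ≠ x₀ → x ≠ x₁ → f x = g x := by
    intro x h0 h1
    have huc : u x ≠ c := fun h => h0 (by rw [hx₀, ← h]; simp)
    have hud : u x ≠ d := fun h => h1 (by rw [hx₁, ← h]; simp)
    simp only [hf, hg, Perm.mul_apply, Equiv.swap_apply_of_ne_of_ne huc hud]
  have hkey := sum_two_points hne hoff
  have hfg : rk (Equiv.swap c d * u) A B = ∑ x, f x := by
    rw [rk, Finset.card_filter]
  have hgg : rk u A B = ∑ x, g x := by
    rw [rk, Finset.card_filter]
  have hux₀ : u x₀ = c := by simp [hx₀]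
  have hux₁ : u x₁ = d := by simp [hx₁]
  have hfx₀ : f x₀ = if (x₀ : ℕ) < A ∧ B ≤ (d : ℕ) then 1 else 0 := by
    simp only [hf, Perm.mul_apply, hux₀, Equiv.swap_apply_left]
  have hfx₁ : f x₁ = if (x₁ : ℕ) < A ∧ B ≤ (c : ℕ) then 1 else 0 := by
    simp only [hf, Perm.mul_apply, hux₁, Equiv.swap_apply_right]
  have hgx₀ : g x₀ = if (x₀ : ℕ) < A ∧ B ≤ (c : ℕ) then 1 else 0 := by
    simp only [hg, hux₀]
  have hgx₁ : g x₁ = if (x₁ : ℕ) < A ∧ B ≤ (d : ℕ) then 1 else 0 := by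
    simp only [hg, hux₁]
  have hcd' : (c : ℕ) < (d : ℕ) := hcd
  have hpos' : (x₀ : ℕ) < (x₁ : ℕ) := hpos
  have hbal : f x₀ + f x₁ = g x₀ + g x₁ +
      (if (x₀ : ℕ) < A ∧ A ≤ (x₁ : ℕ) ∧ (c : ℕ) < B ∧ B ≤ (d : ℕ) then 1 else 0) := by
    rw [hfx₀, hfx₁, hgx₀, hgx₁]
    split_ifs <;> omega
  rw [hfg, hgg]
  omega

/-- Decreasing version of the bump formula. -/
lemma rk_swap_mul' (u : Perm (Fin n)) {c d : Fin n} (hcd : c < d) (hpos : u⁻¹ d < u⁻¹ c)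
    (A B : ℕ) :
    rk u A B = rk (Equiv.swap c d * u) A B +
      (if ((u⁻¹ d : Fin n) : ℕ) < A ∧ A ≤ ((u⁻¹ c : Fin n) : ℕ)
          ∧ (c : ℕ) < B ∧ B ≤ (d : ℕ) then 1 else 0) := by
  set u' := Equiv.swap c d * u with hu'
  have h1 : Equiv.swap c d * u' = u := by rw [hu', swap_mul_self_mul]
  have h2 : u'⁻¹ c = u⁻¹ d := by
    rw [hu', mul_inv_rev, Equiv.swap_inv, Perm.mul_apply, Equiv.swap_apply_left]
  have h3 : u'⁻¹ d = u⁻¹ c := by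
    rw [hu', mul_inv_rev, Equiv.swap_inv, Perm.mul_apply, Equiv.swap_apply_right]
  have := rk_swap_mul u' hcd (by rw [h2, h3]; exact hpos) A B
  rw [h1, h2, h3] at this
  exact this

/-- The rank function determines the permutation. -/
lemma rk_injective {u v : Perm (Fin n)} (h : ∀ A B, rk u A B = rk v A B) : u = v := by
  apply Equiv.ext
  intro x
  have key : ∀ B, (B ≤ ((u x : Fin n) : ℕ)) ↔ (B ≤ ((v x : Fin n) : ℕ)) := by
    intro B
    have h1 := rk_succ u x B
    have h2 := rk_succ v x B
    rw [h (x : ℕ) B, h ((x : ℕ) + 1) B] at h1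
    constructor
    · intro hb
      by_contra hb'
      rw [if_pos hb] at h1
      rw [if_neg hb'] at h2
      omega
    · intro hb
      by_contra hb'
      rw [if_neg hb'] at h1
      rw [if_pos hb] at h2
      omega
  have h1 := (key ((u x : Fin n) : ℕ)).1 (le_refl _)
  have h2 := (key ((v x : Fin n) : ℕ)).2 (le_refl _)
  exact Fin.ext (le_antisymm h1 h2)

lemma bruhat_rk_le {u v : Perm (Fin n)} (h : bruhatLE u v) : ∀ A B, rk u A B ≤ rk v A B := by
  induction h with
  | refl => intro A B; exact le_refl _
  | tail _ hstep ih =>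
    rename_i b c _
    obtain ⟨⟨i, j, hij, rfl⟩, hlen⟩ := hstep
    intro A B
    have hpos : b⁻¹ i < b⁻¹ j := (len_swap_mul_gt_iff hij).1 hlen
    have := rk_swap_mul b hij hpos A B
    have h2 := ih A B
    omega

/-- Measure for the induction in the hard direction. -/
def rkM (v u : Perm (Fin n)) : ℕ :=
  ∑ A ∈ Finset.range (n + 1), ∑ B ∈ Finset.range (n + 1), (rk v A B - rk u A B)

lemma bruhat_of_rk_le {u v : Perm (Fin n)} (h : ∀ A B, rk u A B ≤ rk v A B) :
    bruhatLE u v := by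
  classical
  generalize hM : rkM v u = M
  induction M using Nat.strong_induction_on generalizing u with
  | _ M IH =>
    by_cases huv : u = v
    · exact huv ▸ Relation.ReflTransGen.refl
    · -- find the first position where u and v differ
      have hS : (Finset.univ.filter fun x : Fin n => u x ≠ v x).Nonempty := by
        by_contra hc
        rw [Finset.not_nonempty_iff_eq_empty, Finset.filter_eq_empty_iff] at hc
        exact huv (Equiv.ext fun x => by
          by_contra hne
          exact (hc (Finset.mem_univ x)) hne)
      set a := (Finset.univ.filter fun x : Fin n => u x ≠ v x).min' hS with ha
      have haS : u a ≠ v a := by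
        have := Finset.min'_mem _ hS
        rw [← ha] at this
        exact (Finset.mem_filter.1 this).2
      have hprefix : ∀ x : Fin n, (x : ℕ) < (a : ℕ) → u x = v x := by
        intro x hx
        by_contra hne
        have hmem : x ∈ Finset.univ.filter fun x : Fin n => u x ≠ v x :=
          Finset.mem_filter.2 ⟨Finset.mem_univ x, hne⟩
        have := Finset.min'_le _ x hmem
        rw [← ha] at this
        have : (a : ℕ) ≤ (x : ℕ) := this
        omega
      -- u a < v a
      have hav : ((u a : Fin n) : ℕ) < ((v a : Fin n) : ℕ) := by
        rcases lt_trichotomy ((u a : Fin n) : ℕ) ((v a : Fin n) : ℕ) with h' | h' | h'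
        · exact h'
        · exact absurd (Fin.ext h') haS
        · exfalso
          -- rk u (a+1) (va+1) = rk v (a+1) (va+1) + 1
          have e1 := rk_succ u a (((v a : Fin n) : ℕ) + 1)
          have e2 := rk_succ v a (((v a : Fin n) : ℕ) + 1)
          have e3 : rk u (a : ℕ) (((v a : Fin n) : ℕ) + 1)
              = rk v (a : ℕ) (((v a : Fin n) : ℕ) + 1) := rk_prefix hprefix _
          rw [if_pos (by omega)] at e1
          rw [if_neg (by omega)] at e2
          have := h ((a : ℕ) + 1) (((v a : Fin n) : ℕ) + 1)
          omega
      -- find b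
      have hT : (Finset.univ.filter fun x : Fin n => a < x
          ∧ ((u a : Fin n) : ℕ) < ((u x : Fin n) : ℕ)
          ∧ ((u x : Fin n) : ℕ) ≤ ((v a : Fin n) : ℕ)).Nonempty := by
        refine ⟨u⁻¹ (v a), Finset.mem_filter.2 ⟨Finset.mem_univ _, ?_, ?_, ?_⟩⟩
        · -- a < u⁻¹ (v a)
          have hval : u (u⁻¹ (v a)) = v a := by simp
          have hne : u⁻¹ (v a) ≠ a := by
            intro hh
            rw [hh] at hval
            exact haS hval
          rcases lt_or_gt_of_ne hne with h' | h'
          · exfalso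
            have := hprefix _ h'
            rw [hval] at this
            have : u⁻¹ (v a) = a := v.injective (by rw [← this])
            exact hne this
          · exact h'
        · have hval : u (u⁻¹ (v a)) = v a := by simp
          rw [hval]; exact hav
        · have hval : u (u⁻¹ (v a)) = v a := by simp
          rw [hval]
      set b := (Finset.univ.filter fun x : Fin n => a < x
          ∧ ((u a : Fin n) : ℕ) < ((u x : Fin n) : ℕ)
          ∧ ((u x : Fin n) : ℕ) ≤ ((v a : Fin n) : ℕ)).min' hT with hb
      have hbmem := Finset.min'_mem _ hT
      rw [← hb] at hbmem
      rw [Finset.mem_filter] at hbmem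
      obtain ⟨-, hab, hcd0, hdva⟩ := hbmem
      have hbmin : ∀ x : Fin n, a < x → ((u a : Fin n) : ℕ) < ((u x : Fin n) : ℕ) →
          ((u x : Fin n) : ℕ) ≤ ((v a : Fin n) : ℕ) → b ≤ x := by
        intro x h1 h2 h3
        have : x ∈ Finset.univ.filter fun x : Fin n => a < x
            ∧ ((u a : Fin n) : ℕ) < ((u x : Fin n) : ℕ)
            ∧ ((u x : Fin n) : ℕ) ≤ ((v a : Fin n) : ℕ) :=
          Finset.mem_filter.2 ⟨Finset.mem_univ _, h1, h2, h3⟩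
        have := Finset.min'_le _ x this
        rw [← hb] at this
        exact this
      set c := u a with hc
      set d := u b with hd
      have hcd : c < d := hcd0
      set u' := Equiv.swap c d * u with hu'
      have hinvc : u⁻¹ c = a := by rw [hc]; simp
      have hinvd : u⁻¹ d = b := by rw [hd]; simp
      have hposcd : u⁻¹ c < u⁻¹ d := by rw [hinvc, hinvd]; exact hab
      -- one bruhat step
      have hstep : len u < len u' := by
        rw [hu']
        exact (len_swap_mul_gt_iff hcd).2 hposcd
      have hbru1 : bruhatLE u u' :=
        Relation.ReflTransGen.single ⟨⟨c, d, hcd, hu'⟩, hstep⟩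
      have hbump := fun A B => by
        have := rk_swap_mul u hcd hposcd A B
        rw [hinvc, hinvd, ← hu'] at this
        exact this
      -- rk u' ≤ rk v
      have hle' : ∀ A B, rk u' A B ≤ rk v A B := by
        intro A B
        rw [hbump A B]
        by_cases hcond : (a : ℕ) < A ∧ A ≤ (b : ℕ) ∧ (c : ℕ) < B ∧ B ≤ (d : ℕ)
        swap
        · rw [if_neg hcond]; exact h A B
        rw [if_pos hcond]
        obtain ⟨hc1, hc2, hc3, hc4⟩ := hcond
        -- show rk u A B < rk v A B
        have E1 : rk u A B = rk u ((a : ℕ) + 1) B + cnt u ((a : ℕ) + 1) A B :=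
          rk_split u (by omega) B
        have E2 : rk u ((a : ℕ) + 1) B = rk v (a : ℕ) B := by
          have := rk_succ u a B
          rw [if_neg (by rw [← hc]; omega)] at this
          rw [this, add_zero]
          exact rk_prefix hprefix B
        have E3 : cnt u ((a : ℕ) + 1) A B = cnt u ((a : ℕ) + 1) A (((v a : Fin n) : ℕ) + 1) := by
          apply cnt_congr
          intro x hx1 hx2
          constructor
          · intro hBx
            by_contra hcon
            push_neg at hcon
            have hxa : a < x := by rw [Fin.lt_def]; omega
            have h2' : ((u a : Fin n) : ℕ) < ((u x : Fin n) : ℕ) := by rw [← hc]; omega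
            have h3' : ((u x : Fin n) : ℕ) ≤ ((v a : Fin n) : ℕ) := by omega
            have := hbmin x hxa h2' h3'
            rw [Fin.le_def] at this
            omega
          · intro hx
            have : (d : ℕ) ≤ ((v a : Fin n) : ℕ) := hdva
            omega
        have E4 : rk u A (((v a : Fin n) : ℕ) + 1)
            = rk u ((a : ℕ) + 1) (((v a : Fin n) : ℕ) + 1)
              + cnt u ((a : ℕ) + 1) A (((v a : Fin n) : ℕ) + 1) :=
          rk_split u (by omega) _
        have E5 : rk u ((a : ℕ) + 1) (((v a : Fin n) : ℕ) + 1)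
            = rk v ((a : ℕ) + 1) (((v a : Fin n) : ℕ) + 1) := by
          have e1 := rk_succ u a (((v a : Fin n) : ℕ) + 1)
          have e2 := rk_succ v a (((v a : Fin n) : ℕ) + 1)
          rw [if_neg (by rw [← hc]; omega)] at e1
          rw [if_neg (by omega)] at e2
          have e3 : rk u (a : ℕ) (((v a : Fin n) : ℕ) + 1)
              = rk v (a : ℕ) (((v a : Fin n) : ℕ) + 1) := rk_prefix hprefix _
          omega
        have E6 : rk u A (((v a : Fin n) : ℕ) + 1) ≤ rk v A (((v a : Fin n) : ℕ) + 1) := h A _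
        have E7 : rk v A B = rk v ((a : ℕ) + 1) B + cnt v ((a : ℕ) + 1) A B :=
          rk_split v (by omega) B
        have E8 : rk v ((a : ℕ) + 1) B = rk v (a : ℕ) B + 1 := by
          have := rk_succ v a B
          rw [if_pos (by omega : B ≤ ((v a : Fin n) : ℕ))] at this
          omega
        have E9 : rk v A (((v a : Fin n) : ℕ) + 1)
            = rk v ((a : ℕ) + 1) (((v a : Fin n) : ℕ) + 1)
              + cnt v ((a : ℕ) + 1) A (((v a : Fin n) : ℕ) + 1) :=
          rk_split v (by omega) _
        have E10 : cnt v ((a : ℕ) + 1) A (((v a : Fin n) : ℕ) + 1)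
            ≤ cnt v ((a : ℕ) + 1) A B := cnt_anti (by omega)
        omega
      -- the measure strictly decreases
      have hstrict : rk u ((a : ℕ) + 1) (d : ℕ) < rk u' ((a : ℕ) + 1) (d : ℕ) := by
        rw [hbump]
        rw [if_pos ⟨by omega, by
          have : (a : ℕ) < (b : ℕ) := hab
          omega, by constructor; exact hcd; exact le_refl _⟩]
        omega
      have hMdec : rkM v u' < M := by
        rw [← hM, rkM, rkM]
        have hsum : ∀ A ∈ Finset.range (n+1),
            ∑ B ∈ Finset.range (n + 1), (rk v A B - rk u' A B)
            ≤ ∑ B ∈ Finset.range (n + 1), (rk v A B - rk u A B) := by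
          intro A _
          apply Finset.sum_le_sum
          intro B _
          have h1 := hle' A B
          have h2 := hbump A B
          have h3 := h A B
          omega
        apply Finset.sum_lt_sum hsum
        refine ⟨(a : ℕ) + 1, Finset.mem_range.2 (by omega), ?_⟩
        apply Finset.sum_lt_sum
        · intro B _
          have h1 := hle' ((a:ℕ)+1) B
          have h2 := hbump ((a:ℕ)+1) B
          have h3 := h ((a:ℕ)+1) B
          omega
        · refine ⟨(d : ℕ), Finset.mem_range.2 (by omega), ?_⟩
          have h1 := hle' ((a:ℕ)+1) (d:ℕ)
          omega
      exact Relation.ReflTransGen.trans hbru1 (IH _ hMdec hle' rfl)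

end Rk
section Bruhat
variable {n : ℕ}

lemma bruhat_len_le {u v : Perm (Fin n)} (h : bruhatLE u v) : u = v ∨ len u < len v := by
  induction h with
  | refl => exact Or.inl rfl
  | tail _ hstep ih =>
    right
    rcases ih with rfl | hlt
    · exact hstep.2
    · exact lt_trans hlt hstep.2

lemma bruhat_eq_of_len_le {u v : Perm (Fin n)} (h : bruhatLE u v) (hlen : len v ≤ len u) :
    u = v := by
  rcases bruhat_len_le h with rfl | hlt
  · rfl
  · omega

lemma bruhat_step {u : Perm (Fin n)} {a b : Fin n} (hab : a < b)
    (hlen : len u < len (Equiv.swap a b * u)) : bruhatLE u (Equiv.swap a b * u) :=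
  Relation.ReflTransGen.single ⟨⟨a, b, hab, rfl⟩, hlen⟩

/-- Lifting property, instance A: if `s` raises `w` and raises `v`, then `w ≤ sv → w ≤ v`. -/
lemma lift_A {w v : Perm (Fin n)} {x y : Fin n} (hadj : (y : ℕ) = (x : ℕ) + 1)
    (hw : len w < len (Equiv.swap x y * w)) (hv : len v < len (Equiv.swap x y * v))
    (hle : bruhatLE w (Equiv.swap x y * v)) : bruhatLE w v := by
  have hxy : x < y := by rw [Fin.lt_def]; omega
  have hwpos : w⁻¹ x < w⁻¹ y := (len_swap_mul_gt_iff hxy).1 hw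
  have hvpos : v⁻¹ x < v⁻¹ y := (len_swap_mul_gt_iff hxy).1 hv
  have hrk := bruhat_rk_le hle
  apply bruhat_of_rk_le
  intro A B
  have hbump := rk_swap_mul v hxy hvpos A B
  have h1 := hrk A B
  rw [hbump] at h1
  by_cases hcond : ((v⁻¹ x : Fin n) : ℕ) < A ∧ A ≤ ((v⁻¹ y : Fin n) : ℕ)
      ∧ (x : ℕ) < B ∧ B ≤ (y : ℕ)
  swap
  · rw [if_neg hcond] at h1; exact h1
  rw [if_pos hcond] at h1
  obtain ⟨hc1, hc2, hc3, hc4⟩ := hcond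
  have hB : B = (x : ℕ) + 1 := by omega
  by_contra hcon
  push_neg at hcon
  have heq : rk w A B = rk v A B + 1 := by omega
  -- column x
  have colxw := rk_col w A x
  have colxv := rk_col v A x
  have hsvx := hrk A (x : ℕ)
  have hbumpx := rk_swap_mul v hxy hvpos A (x : ℕ)
  rw [if_neg (by omega)] at hbumpx
  rw [hB] at heq
  have hwi : ¬ ((w⁻¹ x : Fin n) : ℕ) < A := by
    by_contra hcc
    rw [if_pos hcc] at colxw
    rw [if_pos hc1] at colxv
    omega
  -- column y
  have colyw := rk_col w A y
  have colyv := rk_col v A y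
  have hsy := hrk A ((y : ℕ) + 1)
  have hbumpy := rk_swap_mul v hxy hvpos A ((y : ℕ) + 1)
  rw [if_neg (by omega)] at hbumpy
  rw [if_neg (by omega : ¬ ((v⁻¹ y : Fin n) : ℕ) < A)] at colyv
  rw [hadj] at colyw colyv hsy hbumpy
  have hwy : ((w⁻¹ y : Fin n) : ℕ) < A := by
    by_contra hcc
    rw [if_neg hcc] at colyw
    omega
  -- contradiction with hwpos
  rw [Fin.lt_def] at hwpos
  omega

/-- Lifting property, instance B: if `s` lowers `w` and raises `v`, then `w ≤ sv → sw ≤ v`. -/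
lemma lift_B {w v : Perm (Fin n)} {x y : Fin n} (hadj : (y : ℕ) = (x : ℕ) + 1)
    (hw : len (Equiv.swap x y * w) < len w) (hv : len v < len (Equiv.swap x y * v))
    (hle : bruhatLE w (Equiv.swap x y * v)) : bruhatLE (Equiv.swap x y * w) v := by
  have hxy : x < y := by rw [Fin.lt_def]; omega
  have hwpos : w⁻¹ y < w⁻¹ x := (len_swap_mul_lt_iff hxy).1 hw
  have hvpos : v⁻¹ x < v⁻¹ y := (len_swap_mul_gt_iff hxy).1 hv
  have hrk := bruhat_rk_le hle
  apply bruhat_of_rk_le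
  intro A B
  have hbumpw := rk_swap_mul' w hxy hwpos A B
  have hbumpv := rk_swap_mul v hxy hvpos A B
  have h1 := hrk A B
  rw [hbumpv] at h1
  by_cases hcondw : ((w⁻¹ y : Fin n) : ℕ) < A ∧ A ≤ ((w⁻¹ x : Fin n) : ℕ)
      ∧ (x : ℕ) < B ∧ B ≤ (y : ℕ)
  · rw [if_pos hcondw] at hbumpw
    split_ifs at h1 <;> omega
  · rw [if_neg hcondw] at hbumpw
    by_cases hcondv : ((v⁻¹ x : Fin n) : ℕ) < A ∧ A ≤ ((v⁻¹ y : Fin n) : ℕ)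
        ∧ (x : ℕ) < B ∧ B ≤ (y : ℕ)
    swap
    · rw [if_neg hcondv] at h1; omega
    rw [if_pos hcondv] at h1
    obtain ⟨hc1, hc2, hc3, hc4⟩ := hcondv
    have hB : B = (x : ℕ) + 1 := by omega
    by_contra hcon
    push_neg at hcon
    have heq : rk w A B = rk v A B + 1 := by omega
    -- column x
    have colxw := rk_col w A x
    have colxv := rk_col v A x
    have hsvx := hrk A (x : ℕ)
    have hbumpx := rk_swap_mul v hxy hvpos A (x : ℕ)
    rw [if_neg (by omega)] at hbumpx
    rw [hB] at heq
    rw [if_pos hc1] at colxv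
    have hwx : ¬ ((w⁻¹ x : Fin n) : ℕ) < A := by
      by_contra hcc
      rw [if_pos hcc] at colxw
      omega
    have hwy : ¬ ((w⁻¹ y : Fin n) : ℕ) < A := by
      intro hcc
      apply hcondw
      rw [Fin.lt_def] at hwpos
      exact ⟨hcc, by omega, by omega, by omega⟩
    -- column y
    have colyw := rk_col w A y
    have colyv := rk_col v A y
    have hsy := hrk A ((y : ℕ) + 1)
    have hbumpy := rk_swap_mul v hxy hvpos A ((y : ℕ) + 1)
    rw [if_neg (by omega)] at hbumpy
    rw [if_neg (by omega : ¬ ((v⁻¹ y : Fin n) : ℕ) < A)] at colyv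
    rw [if_neg hwy] at colyw
    rw [hadj] at colyw colyv hsy hbumpy
    omega

end Bruhat
section Algebra
variable {n : ℕ}

/-- The algebra map killing variable `a`, sending `X a` to `X b`. -/
def killVar (a b : Fin n) (hba : b ≠ a) :
    Pol n →ₐ[ℂ] MvPolynomial {x : Fin n // x ≠ a} ℂ :=
  aeval (fun x => if h : x = a then X ⟨b, hba⟩ else X ⟨x, h⟩)

lemma killVar_X_self (a b : Fin n) (hba : b ≠ a) :
    killVar a b hba (X a) = X ⟨b, hba⟩ := by simp [killVar]

lemma killVar_X_ne (a b : Fin n) (hba : b ≠ a) {x : Fin n} (h : x ≠ a) :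
    killVar a b hba (X x) = X ⟨x, h⟩ := by simp [killVar, h]

/-- `Fin n ≃ Option {x // x ≠ a}`. -/
def optEquiv (a : Fin n) : Option {x : Fin n // x ≠ a} ≃ Fin n where
  toFun o := o.elim a Subtype.val
  invFun x := if h : x = a then none else some ⟨x, h⟩
  left_inv o := by
    cases o with
    | none => simp
    | some x => simp [x.2]
  right_inv x := by
    by_cases h : x = a
    · subst h; simp
    · simp [h]

/-- `ℂ[t] ≅ (ℂ[t without a])[X a]`. -/
def polyEquiv (a : Fin n) :
    Pol n ≃ₐ[ℂ] Polynomial (MvPolynomial {x : Fin n // x ≠ a} ℂ) :=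
  (renameEquiv ℂ (optEquiv a).symm).trans (optionEquivLeft ℂ _)

lemma optEquiv_symm_self (a : Fin n) : (optEquiv a).symm a = none := by
  simp [optEquiv, Equiv.symm]

lemma optEquiv_symm_ne (a : Fin n) {x : Fin n} (h : x ≠ a) :
    (optEquiv a).symm x = some ⟨x, h⟩ := by
  simp [optEquiv, Equiv.symm, h]

lemma polyEquiv_X_self (a : Fin n) : polyEquiv a (X a) = Polynomial.X := by
  rw [polyEquiv, AlgEquiv.trans_apply, renameEquiv_apply, rename_X, optEquiv_symm_self,
    optionEquivLeft_X_none]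

lemma polyEquiv_X_ne (a : Fin n) {x : Fin n} (h : x ≠ a) :
    polyEquiv a (X x) = Polynomial.C (X ⟨x, h⟩) := by
  rw [polyEquiv, AlgEquiv.trans_apply, renameEquiv_apply, rename_X, optEquiv_symm_ne a h,
    optionEquivLeft_X_some]

lemma killVar_eq_eval (a b : Fin n) (hba : b ≠ a) (f : Pol n) :
    killVar a b hba f = Polynomial.eval (X ⟨b, hba⟩) (polyEquiv a f) := by
  have : (killVar a b hba).toRingHom
      = (Polynomial.evalRingHom (X ⟨b, hba⟩)).comp (polyEquiv a : Pol n →+* _) := by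
    apply MvPolynomial.ringHom_ext
    · intro r
      simp only [AlgHom.toRingHom_eq_coe, RingHom.coe_coe, RingHom.coe_comp,
        Function.comp_apply]
      rw [show (C r : Pol n) = algebraMap ℂ (Pol n) r from rfl]
      rw [AlgHom.commutes, AlgEquiv.commutes]
      simp [Polynomial.algebraMap_apply, MvPolynomial.algebraMap_eq]
    · intro x
      simp only [AlgHom.toRingHom_eq_coe, RingHom.coe_coe, RingHom.coe_comp,
        Function.comp_apply, Polynomial.coe_evalRingHom]
      by_cases h : x = a
      · subst h
        rw [killVar_X_self, polyEquiv_X_self, Polynomial.eval_X]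
      · rw [killVar_X_ne a b hba h, polyEquiv_X_ne a h, Polynomial.eval_C]
  calc killVar a b hba f = (killVar a b hba).toRingHom f := rfl
    _ = _ := by rw [this]; rfl

/-- Main divisibility characterization. -/
lemma X_sub_X_dvd_iff (a b : Fin n) (hba : b ≠ a) (f : Pol n) :
    (X a - X b : Pol n) ∣ f ↔ killVar a b hba f = 0 := by
  constructor
  · rintro ⟨g, rfl⟩
    rw [map_mul, map_sub, killVar_X_self, killVar_X_ne a b hba hba, sub_self, zero_mul]
  · intro h0
    have hroot : (polyEquiv a f).IsRoot (X ⟨b, hba⟩) := by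
      rw [Polynomial.IsRoot, ← killVar_eq_eval a b hba f, h0]
    obtain ⟨q, hq⟩ := (Polynomial.dvd_iff_isRoot).2 hroot
    refine ⟨(polyEquiv a).symm q, ?_⟩
    apply (polyEquiv a).injective
    rw [map_mul, map_sub, polyEquiv_X_self, polyEquiv_X_ne a hba, hq,
      AlgEquiv.apply_symm_apply]

lemma X_sub_X_ne_zero {a b : Fin n} (hab : a ≠ b) : (X a - X b : Pol n) ≠ 0 := by
  intro h
  rw [sub_eq_zero] at h
  exact hab (MvPolynomial.X_injective h)

lemma prime_X_sub_X {a b : Fin n} (hab : a ≠ b) : Prime (X a - X b : Pol n) := by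
  have hba : b ≠ a := hab.symm
  refine ⟨X_sub_X_ne_zero hab, ?_, ?_⟩
  · intro hu
    have := hu.map (killVar a b hba)
    rw [map_sub, killVar_X_self, killVar_X_ne a b hba hba, sub_self] at this
    exact not_isUnit_zero this
  · intro f g hdvd
    rw [X_sub_X_dvd_iff a b hba] at hdvd ⊢
    rw [X_sub_X_dvd_iff a b hba]
    rw [map_mul] at hdvd
    exact mul_eq_zero.1 hdvd

lemma not_dvd_X_sub_X {a b c d : Fin n} (hab : a < b) (hcd : c < d) (hne : (a, b) ≠ (c, d)) :
    ¬ ((X a - X b : Pol n) ∣ (X c - X d)) := by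
  have hba : b ≠ a := (ne_of_lt hab).symm
  intro hdvd
  rw [X_sub_X_dvd_iff a b hba, map_sub] at hdvd
  by_cases hc : c = a
  · subst hc
    have hda : d ≠ c := (ne_of_lt hcd).symm
    rw [killVar_X_self, killVar_X_ne c b hba hda, sub_eq_zero] at hdvd
    ·
      have := MvPolynomial.X_injective hdvd
      have hbd : b = d := congrArg Subtype.val this
      exact hne (by rw [hbd])
  · by_cases hd : d = a
    · subst hd
      rw [killVar_X_ne d b hba hc, killVar_X_self, sub_eq_zero] at hdvd
      have := MvPolynomial.X_injective hdvd
      have : c = b := congrArg Subtype.val this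
      -- c < d = a < b = c, contradiction
      rw [Fin.lt_def] at hab hcd
      omega
    · rw [killVar_X_ne a b hba hc, killVar_X_ne a b hba hd, sub_eq_zero] at hdvd
      have := MvPolynomial.X_injective hdvd
      have : c = d := congrArg Subtype.val this
      exact (ne_of_lt hcd) this

lemma isHomog_X_sub_X (a b : Fin n) : (X a - X b : Pol n).IsHomogeneous 1 :=
  (isHomogeneous_X ℂ a).sub (isHomogeneous_X ℂ b)

/-- Product of pairwise non-associate primes divides. -/
lemma prod_dvd_of_primes {ι : Type*} [DecidableEq ι] {s : Finset ι} {f : ι → Pol n}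
    (hp : ∀ i ∈ s, Prime (f i)) (hnd : ∀ i ∈ s, ∀ j ∈ s, i ≠ j → ¬ (f i ∣ f j)) :
    ∀ g : Pol n, (∀ i ∈ s, f i ∣ g) → (∏ i ∈ s, f i) ∣ g := by
  classical
  induction s using Finset.induction with
  | empty => intro g _; simp
  | insert _ _ ha =>
    rename_i a s ih
    intro g hdvd
    obtain ⟨m, rfl⟩ := hdvd a (Finset.mem_insert_self a s)
    rw [Finset.prod_insert ha]
    apply mul_dvd_mul_left
    apply ih
    · intro i hi; exact hp i (Finset.mem_insert_of_mem hi)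
    · intro i hi j hj hij
      exact hnd i (Finset.mem_insert_of_mem hi) j (Finset.mem_insert_of_mem hj) hij
    · intro i hi
      have h1 : f i ∣ f a * m := hdvd i (Finset.mem_insert_of_mem hi)
      have h2 : Prime (f i) := hp i (Finset.mem_insert_of_mem hi)
      rcases h2.2.2 _ _ h1 with h | h
      · exact absurd h (hnd i (Finset.mem_insert_of_mem hi) a (Finset.mem_insert_self a s)
          (by rintro rfl; exact ha hi))
      · exact h

lemma pairset_prod_dvd {F : Finset (Fin n × Fin n)} (hlt : ∀ q ∈ F, q.1 < q.2) {g : Pol n}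
    (hdvd : ∀ q ∈ F, (X q.1 - X q.2 : Pol n) ∣ g) :
    (∏ q ∈ F, (X q.1 - X q.2 : Pol n)) ∣ g := by
  apply prod_dvd_of_primes
  · intro q hq; exact prime_X_sub_X (ne_of_lt (hlt q hq))
  · intro q hq r hr hne
    exact not_dvd_X_sub_X (hlt q hq) (hlt r hr) (by exact_mod_cast hne)
  · exact hdvd

lemma pairset_prod_homog (F : Finset (Fin n × Fin n)) :
    (∏ q ∈ F, (X q.1 - X q.2 : Pol n)).IsHomogeneous F.card := by
  have := MvPolynomial.IsHomogeneous.prod F (fun q => (X q.1 - X q.2 : Pol n)) (fun _ => 1)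
    (fun q _ => isHomog_X_sub_X q.1 q.2)
  simpa using this

/-- Degree lemma: a homogeneous polynomial of degree `m` divisible by a homogeneous
polynomial of larger degree is zero. -/
lemma eq_zero_of_dvd_of_homog {P f : Pol n} {N m : ℕ} (hP : P.IsHomogeneous N)
    (hf : f.IsHomogeneous m) (hmn : m < N) (hdvd : P ∣ f) : f = 0 := by
  obtain ⟨h, rfl⟩ := hdvd
  have hmem : P * h ∈ homogeneousSubmodule (Fin n) ℂ m :=
    (mem_homogeneousSubmodule _ _).2 hf
  have h1 : P * h = homogeneousComponent m (P * h) := by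
    rw [homogeneousComponent_of_mem hmem, if_pos rfl]
  have h2 : P * h = ∑ i ∈ Finset.range (h.totalDegree + 1), P * homogeneousComponent i h := by
    rw [← Finset.mul_sum, sum_homogeneousComponent]
  calc P * h = homogeneousComponent m (P * h) := h1
    _ = ∑ i ∈ Finset.range (h.totalDegree + 1),
          homogeneousComponent m (P * homogeneousComponent i h) := by
        rw [h2, map_sum]
    _ = 0 := by
        apply Finset.sum_eq_zero
        intro i _
        have hmemi : P * homogeneousComponent i h ∈ homogeneousSubmodule (Fin n) ℂ (N + i) :=
          (mem_homogeneousSubmodule _ _).2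
            (hP.mul (homogeneousComponent_isHomogeneous i h))
        rw [homogeneousComponent_of_mem hmemi, if_neg (by omega)]

end Algebra
section PactGKM
variable {n : ℕ}

lemma pact_X (w : Perm (Fin n)) (x : Fin n) : pact w (X x) = X (w x) := by
  rw [pact, rename_X]

lemma pact_sub (w : Perm (Fin n)) (f g : Pol n) : pact w (f - g) = pact w f - pact w g :=
  map_sub (rename ⇑w) f g

lemma pact_mul (w : Perm (Fin n)) (f g : Pol n) : pact w (f * g) = pact w f * pact w g :=
  map_mul (rename ⇑w) f g

lemma pact_zero (w : Perm (Fin n)) : pact w (0 : Pol n) = 0 := map_zero _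

lemma pact_dvd (w : Perm (Fin n)) {f g : Pol n} (h : f ∣ g) : pact w f ∣ pact w g := by
  obtain ⟨c, rfl⟩ := h
  exact ⟨pact w c, pact_mul w f c⟩

lemma pact_homog (w : Perm (Fin n)) {f : Pol n} {m : ℕ} (h : f.IsHomogeneous m) :
    (pact w f).IsHomogeneous m := h.rename_isHomogeneous

lemma pact_pact (w u : Perm (Fin n)) (f : Pol n) :
    pact w (pact u f) = pact (w * u) f := by
  rw [pact, pact, pact, rename_rename]
  rfl

lemma pact_one (f : Pol n) : pact 1 f = f := by
  rw [pact]
  have : ⇑(1 : Perm (Fin n)) = id := rfl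
  rw [this, rename_id, AlgHom.id_apply]

/-- conjugation of a swap under multiplication. -/
lemma swap_conj_mul (w : Perm (Fin n)) (i j : Fin n) (v : Perm (Fin n)) :
    Equiv.swap (w⁻¹ i) (w⁻¹ j) * (w⁻¹ * v) = w⁻¹ * (Equiv.swap i j * v) := by
  have h := Equiv.swap_apply_apply w⁻¹ i j
  rw [h]
  group

/-- the dot action preserves the GKM condition. -/
lemma GKM_dot {p : Perm (Fin n) → Pol n} (hp : GKM n p) (w : Perm (Fin n)) :
    GKM n (dot w p) := by
  intro v i j hij
  have hne : w⁻¹ i ≠ w⁻¹ j := fun h => (ne_of_lt hij) (by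
    have := congrArg w h; simpa using this)
  rcases lt_or_gt_of_ne hne with hlt | hgt
  · have h := hp (w⁻¹ * v) (w⁻¹ i) (w⁻¹ j) hlt
    rw [swap_conj_mul] at h
    have h2 := pact_dvd w h
    rw [pact_sub (w := w) (f := X (w⁻¹ i)) (g := X (w⁻¹ j)), pact_X, pact_X,
      show w (w⁻¹ i) = i from w.apply_symm_apply i, show w (w⁻¹ j) = j from w.apply_symm_apply j] at h2
    simpa [dot, pact_sub] using h2
  · have h := hp (w⁻¹ * v) (w⁻¹ j) (w⁻¹ i) hgt
    rw [Equiv.swap_comm, swap_conj_mul] at h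
    have h2 := pact_dvd w h
    rw [pact_sub (w := w) (f := X (w⁻¹ j)) (g := X (w⁻¹ i)), pact_X, pact_X,
      show w (w⁻¹ j) = j from w.apply_symm_apply j, show w (w⁻¹ i) = i from w.apply_symm_apply i] at h2
    have h3 : (X i - X j : Pol n) = -(X j - X i) := by ring
    rw [h3, neg_dvd]
    simpa [dot, pact_sub] using h2

lemma dot_homog {p : Perm (Fin n) → Pol n} {m : ℕ} (hp : ∀ v, (p v).IsHomogeneous m)
    (w : Perm (Fin n)) : ∀ v, ((dot w p) v).IsHomogeneous m := fun v =>
  pact_homog w (hp (w⁻¹ * v))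

/-- `killVar` is invariant under the corresponding swap action. -/
lemma killVar_pact_swap (a b : Fin n) (hba : b ≠ a) (f : Pol n) :
    killVar a b hba (pact (Equiv.swap a b) f) = killVar a b hba f := by
  have : (killVar a b hba).comp
      (rename ⇑(Equiv.swap a b) : Pol n →ₐ[ℂ] Pol n) = killVar a b hba := by
    apply MvPolynomial.algHom_ext
    intro x
    simp only [AlgHom.comp_apply, rename_X]
    by_cases hx : x = a
    · rw [hx, Equiv.swap_apply_left, killVar_X_ne a b hba hba, killVar_X_self]
    · by_cases hxb : x = b
      · rw [hxb, Equiv.swap_apply_right, killVar_X_self, killVar_X_ne a b hba hba]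
      · rw [Equiv.swap_apply_of_ne_of_ne hx hxb]
  calc killVar a b hba (pact (Equiv.swap a b) f)
      = ((killVar a b hba).comp (rename ⇑(Equiv.swap a b) : Pol n →ₐ[ℂ] Pol n)) f := rfl
    _ = killVar a b hba f := by rw [this]

lemma X_sub_X_dvd_sub_pact_swap (a b : Fin n) (hba : b ≠ a) (f : Pol n) :
    (X a - X b : Pol n) ∣ (f - pact (Equiv.swap a b) f) := by
  rw [X_sub_X_dvd_iff a b hba, map_sub, killVar_pact_swap, sub_self]

end PactGKM

section Iset
variable {n : ℕ}

def Iset (w : Perm (Fin n)) : Finset (Fin n × Fin n) :=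
  Finset.univ.filter fun q : Fin n × Fin n =>
    q.1 < q.2 ∧ len (Equiv.swap q.1 q.2 * w) < len w

lemma card_Iset (w : Perm (Fin n)) : (Iset w).card = len w :=
  card_inversion_transpositions w

lemma mem_Iset {w : Perm (Fin n)} {q : Fin n × Fin n} :
    q ∈ Iset w ↔ q.1 < q.2 ∧ w⁻¹ q.2 < w⁻¹ q.1 := by
  rw [Iset, Finset.mem_filter]
  constructor
  · rintro ⟨-, h1, h2⟩; exact ⟨h1, (len_swap_mul_lt_iff h1).1 h2⟩
  · rintro ⟨h1, h2⟩
    exact ⟨Finset.mem_univ _, h1, (len_swap_mul_lt_iff h1).2 h2⟩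

def prodI (w : Perm (Fin n)) : Pol n := ∏ q ∈ Iset w, (X q.1 - X q.2 : Pol n)

lemma prodI_homog (w : Perm (Fin n)) : (prodI w).IsHomogeneous (len w) := by
  rw [prodI, ← card_Iset w]
  exact pairset_prod_homog (Iset w)

/-- Key identity: `s (prodI w) = -(X x - X y) * prodI (s w)` for a descent `s`. -/
lemma pact_prodI {w : Perm (Fin n)} {x y : Fin n} (hadj : (y : ℕ) = (x : ℕ) + 1)
    (hlen : len (Equiv.swap x y * w) < len w) :
    pact (Equiv.swap x y) (prodI w)
      = -(X x - X y : Pol n) * prodI (Equiv.swap x y * w) := by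
  have hxy : x < y := by rw [Fin.lt_def]; omega
  set s := Equiv.swap x y with hs
  have hmem : (x, y) ∈ Iset w := by
    rw [Iset, Finset.mem_filter]
    exact ⟨Finset.mem_univ _, hxy, hlen⟩
  have hswinv : ∀ z : Fin n, (s * w)⁻¹ z = w⁻¹ (s z) := by
    intro z
    rw [mul_inv_rev, Perm.mul_apply, hs, Equiv.swap_inv]
  have hposw : w⁻¹ y < w⁻¹ x := by
    have := (len_swap_mul_lt_iff hxy).1 (by rw [← hs] at *; exact hlen)
    exact this
  have hmap : pact s (prodI w) = ∏ q ∈ Iset w, (X (s q.1) - X (s q.2) : Pol n) := by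
    rw [prodI, pact, map_prod]
    apply Finset.prod_congr rfl
    intro q _
    rw [map_sub, rename_X, rename_X]
  rw [hmap, ← Finset.mul_prod_erase _ _ hmem]
  have hfst : (X (s x) - X (s y) : Pol n) = -(X x - X y) := by
    rw [hs, Equiv.swap_apply_left, Equiv.swap_apply_right]
    ring
  rw [hfst]
  congr 1
  have hnotmem : (x, y) ∉ Iset (s * w) := by
    intro h
    rw [mem_Iset] at h
    have h2 := h.2
    rw [hswinv, hswinv, hs, Equiv.swap_apply_left, Equiv.swap_apply_right] at h2
    exact absurd hposw (not_lt.2 (le_of_lt h2))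
  rw [prodI]
  apply Finset.prod_bij' (i := fun (q : Fin n × Fin n) _ => ((s q.1 : Fin n), (s q.2 : Fin n)))
    (j := fun (q : Fin n × Fin n) _ => ((s q.1 : Fin n), (s q.2 : Fin n)))
  · -- i maps into Iset (s*w)
    intro q hq
    rw [Finset.mem_erase] at hq
    obtain ⟨hne, hq⟩ := hq
    rw [mem_Iset] at hq ⊢
    obtain ⟨h12, hpos⟩ := hq
    refine ⟨adj_swap_lt hadj h12 hne, ?_⟩
    rw [hswinv, hswinv]
    simp only [hs, Equiv.swap_apply_self]
    exact hpos
  · -- j maps back into erase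
    intro q hq
    rw [mem_Iset] at hq
    obtain ⟨h12, hpos⟩ := hq
    have hqne : q ≠ (x, y) := by
      rintro rfl
      exact hnotmem (mem_Iset.2 ⟨h12, hpos⟩)
    rw [Finset.mem_erase, mem_Iset]
    refine ⟨?_, adj_swap_lt hadj h12 hqne, ?_⟩
    · intro h
      rw [Prod.ext_iff] at h
      have h1 : q.1 = y := by
        have := congrArg (⇑s) h.1
        simpa [hs, Equiv.swap_apply_self, Equiv.swap_apply_left] using this
      have h2 : q.2 = x := by
        have := congrArg (⇑s) h.2
        simpa [hs, Equiv.swap_apply_self, Equiv.swap_apply_right] using this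
      rw [h1, h2] at h12
      rw [Fin.lt_def] at h12
      omega
    · rw [← hswinv, ← hswinv]
      exact hpos
  · intro q hq
    simp [hs, Equiv.swap_apply_self]
  · intro q hq
    simp [hs, Equiv.swap_apply_self]
  · intro q hq
    rfl

end Iset
section Master
variable {n : ℕ}

lemma not_bruhat_of_len_le {w v : Perm (Fin n)} (hlen : len v ≤ len w) (hne : v ≠ w) :
    ¬ bruhatLE w v := by
  intro hb
  rcases bruhat_len_le hb with h | h
  · exact hne h.symm
  · omega

/-- Master uniqueness lemma. -/
lemma master {e : Perm (Fin n) → Pol n} {m : ℕ} (hGKM : GKM n e)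
    (hhom : ∀ v, (e v).IsHomogeneous m)
    (H : ∀ v, (∀ u, len u < len v → e u = 0) → len v ≤ m → e v = 0) :
    ∀ v, e v = 0 := by
  intro v
  generalize hk : len v = k
  induction k using Nat.strong_induction_on generalizing v with
  | _ k IH =>
  subst hk
  have IH' : ∀ u, len u < len v → e u = 0 := fun u hu => IH (len u) hu u rfl
  by_cases hvm : len v ≤ m
  · exact H v IH' hvm
  · push_neg at hvm
    have hdvd : ∀ q ∈ Iset v, (X q.1 - X q.2 : Pol n) ∣ e v := by
      intro q hq
      rw [Iset, Finset.mem_filter] at hq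
      obtain ⟨-, h1, h2⟩ := hq
      have hz : e (Equiv.swap q.1 q.2 * v) = 0 := IH' _ h2
      have := hGKM v q.1 q.2 h1
      rwa [hz, sub_zero] at this
    have hsort : ∀ q ∈ Iset v, q.1 < q.2 := fun q hq => (mem_Iset.1 hq).1
    have hprod := pairset_prod_dvd hsort hdvd
    have hhomP : (∏ q ∈ Iset v, (X q.1 - X q.2 : Pol n)).IsHomogeneous (len v) := by
      rw [← card_Iset v]
      exact pairset_prod_homog _
    exact eq_zero_of_dvd_of_homog hhomP (hhom v) hvm hprod

end Master

section Main
variable {n : ℕ}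

/-- Main workhorse: both statements, for an adjacent transposition `swap x y`. -/
theorem main_statement (pw : Perm (Fin n) → Perm (Fin n) → Pol n)
    (hpw : ∀ w, IsCanonical w (pw w))
    (w : Perm (Fin n)) (x y : Fin n) (hadj : (y : ℕ) = (x : ℕ) + 1) :
    (len (Equiv.swap x y * w) < len w →
      ∀ v, dot (Equiv.swap x y) (pw w) v
        = pw w v - (X x - X y : Pol n) * pw (Equiv.swap x y * w) v) ∧
    (len w < len (Equiv.swap x y * w) → ∀ v, dot (Equiv.swap x y) (pw w) v = pw w v) := by
  have hxy : x < y := by rw [Fin.lt_def]; omega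
  have hba : y ≠ x := by
    intro h; rw [Fin.ext_iff] at h; omega
  set s := Equiv.swap x y with hs
  have hsinv : s⁻¹ = s := Equiv.swap_inv x y
  have hss : ∀ u : Perm (Fin n), s * (s * u) = u := fun u => by
    rw [hs, swap_mul_self_mul]
  obtain ⟨hGp, hhomp, hsupp, hval0⟩ := hpw w
  set p := pw w with hp
  have hval : p w = prodI w := hval0
  have hdot : ∀ (q : Perm (Fin n) → Pol n) v, dot s q v = pact s (q (s * v)) := by
    intro q v; rw [dot, hsinv]
  have hGKMxy : ∀ (q : Perm (Fin n) → Pol n), GKM n q → ∀ v,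
      (X x - X y : Pol n) ∣ (q v - q (s * v)) := fun q hq v => hq v x y hxy
  -- reusable: killVar of (pact s f) equals killVar of f, and killVar kills α-multiples
  have hkillα : ∀ f : Pol n, killVar x y hba ((X x - X y : Pol n) * f) = 0 := by
    intro f
    rw [map_mul, map_sub, killVar_X_self, killVar_X_ne x y hba hba, sub_self, zero_mul]
  have hkillGKM : ∀ (q : Perm (Fin n) → Pol n), GKM n q → ∀ v,
      killVar x y hba (q v) = killVar x y hba (q (s * v)) := by
    intro q hq v
    obtain ⟨k, hk⟩ := hGKMxy q hq v
    have h0 : killVar x y hba (q v - q (s * v)) = 0 := by rw [hk, hkillα]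
    rw [map_sub] at h0
    linear_combination h0
  constructor
  · -- CASE 1 : descent
    intro hlen1
    obtain ⟨hGp', hhomp', hsupp', hval0'⟩ := hpw (s * w)
    set p' := pw (s * w) with hp'
    have hval' : p' (s * w) = prodI (s * w) := hval0'
    have hlw : len w = len (s * w) + 1 := by
      apply len_adj_swap_mul_of_gt hadj
      exact (len_swap_mul_lt_iff hxy).1 hlen1
    have hswLEw : bruhatLE (s * w) w := by
      have h1 : len (s * w) < len (Equiv.swap x y * (s * w)) := by
        rw [← hs, hss]; omega
      have := bruhat_step hxy h1
      rwa [← hs, hss] at this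
    set e : Perm (Fin n) → Pol n :=
      fun v => dot s p v - p v + (X x - X y : Pol n) * p' v with he
    have heform : ∀ v, e v = pact s (p (s * v)) - p v + (X x - X y : Pol n) * p' v := by
      intro v; rw [he]; simp only [hdot]
    have hGe : GKM n e := by
      have h1 : (dot s p - p + (X x - X y : Pol n) • p') ∈ gkmSubmodule n :=
        Submodule.add_mem _ (Submodule.sub_mem _ (GKM_dot hGp s) hGp)
          (Submodule.smul_mem _ _ hGp')
      exact h1
    have hhome : ∀ v, (e v).IsHomogeneous (len w) := by
      intro v
      apply ((dot_homog hhomp s v).sub (hhomp v)).add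
      have := (isHomog_X_sub_X x y).mul (hhomp' v)
      rwa [show 1 + len (s * w) = len w by omega] at this
    have hαdvd : ∀ v, (X x - X y : Pol n) ∣ e v := by
      intro v
      rw [X_sub_X_dvd_iff x y hba, heform v, map_add, map_sub, killVar_pact_swap,
        hkillα, add_zero, hkillGKM p hGp v, sub_self]
    have hpsw : p (s * w) = 0 := hsupp _ (not_bruhat_of_len_le (by omega)
      (fun h => by rw [h] at hlw; omega))
    have hzero : ∀ v, e v = 0 := by
      apply master hGe hhome
      intro v IH' hlenv
      by_cases hb' : bruhatLE (s * w) v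
      · by_cases hvsw : v = s * w
        · subst hvsw
          rw [heform, hss, hpsw, hval, hval', pact_prodI hadj (by rw [← hs]; exact hlen1)]
          rw [← hs]
          ring
        · have hlv : len v = len w := by
            rcases bruhat_len_le hb' with h | h
            · exact absurd h.symm hvsw
            · omega
          have hedvd : ∀ q ∈ Iset v, (X q.1 - X q.2 : Pol n) ∣ e v := by
            intro q hq
            rw [Iset, Finset.mem_filter] at hq
            have h1 := hGe v q.1 q.2 hq.2.1
            have h2 : e (Equiv.swap q.1 q.2 * v) = 0 := IH' _ hq.2.2
            rwa [h2, sub_zero] at h1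
          have hsvne := len_swap_mul_ne hxy (v := v)
          rw [← hs] at hsvne
          rcases lt_or_gt_of_ne hsvne with hsv | hsv
          · -- s*v < v : then necessarily v = w ; the α² argument
            have hveqw : v = w := by
              have h1 : len (s * w) < len (Equiv.swap x y * (s * w)) := by
                rw [← hs, hss]; omega
              have h2 : len (s * v) < len (Equiv.swap x y * (s * v)) := by
                rw [← hs, hss]; omega
              have h3 : bruhatLE (s * w) (Equiv.swap x y * (s * v)) := by
                rw [← hs, hss]; exact hb'
              have h4 := lift_A hadj h1 h2 h3
              have h5 : s * w = s * v := bruhat_eq_of_len_le h4 (by omega)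
              have h6 := congrArg (fun u => s * u) h5
              simp only [hss] at h6
              exact h6.symm
            have hveqw' : w = v := hveqw.symm
            subst hveqw' 
            obtain ⟨k, hk⟩ := hGKMxy p' hGp' (s * w)
            rw [hss] at hk
            have hkey : pact s (prodI w) = -(X x - X y : Pol n) * prodI (s * w) := by
              have := pact_prodI hadj (by rw [← hs]; exact hlen1)
              rwa [← hs] at this
            have hPw : prodI w = (X x - X y : Pol n) * pact s (prodI (s * w)) := by
              have h2 := congrArg (pact s) hkey
              rw [pact_pact, show s * s = 1 from by rw [hs, Equiv.swap_mul_self],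
                pact_one] at h2
              rw [h2, pact_mul]
              have h3 : pact s (-(X x - X y : Pol n)) = (X x - X y : Pol n) := by
                rw [pact, map_neg, map_sub, rename_X, rename_X, hs,
                  Equiv.swap_apply_left, Equiv.swap_apply_right]
                ring
              rw [h3]
            obtain ⟨g, hg⟩ : (X x - X y : Pol n) ∣ (prodI (s*w) - pact s (prodI (s*w))) := by
              have := X_sub_X_dvd_sub_pact_swap x y hba (prodI (s * w))
              rwa [← hs] at this
            have hew2 : e w = (X x - X y : Pol n) * (X x - X y : Pol n) * (g - k) := by
              rw [heform, hpsw, pact_zero, hval, hPw]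
              have hp'w : p' w = p' (s * w) - (X x - X y : Pol n) * k := by
                rw [← hk]; ring
              rw [hp'w, hval']
              have h4 : pact s (prodI (s * w))
                  = prodI (s * w) - (X x - X y : Pol n) * g := by
                rw [← hg]; ring
              rw [h4]
              ring
            have hxymem : (x, y) ∈ Iset w := by
              rw [Iset, Finset.mem_filter]
              refine ⟨Finset.mem_univ _, hxy, ?_⟩
              rw [← hs]; exact hlen1
            have hdvdgk : ∀ q ∈ (Iset w).erase (x, y),
                (X q.1 - X q.2 : Pol n) ∣ (g - k) := by
              intro q hq
              rw [Finset.mem_erase] at hq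
              obtain ⟨hne, hq⟩ := hq
              have hq1 : q.1 < q.2 := (mem_Iset.1 hq).1
              have hdvd_ew : (X q.1 - X q.2 : Pol n) ∣ e w := by
                apply hedvd q
                exact hq
              rw [hew2] at hdvd_ew
              have hprime := prime_X_sub_X (ne_of_lt hq1)
              have hnotα : ¬ ((X q.1 - X q.2 : Pol n) ∣ (X x - X y)) :=
                not_dvd_X_sub_X hq1 hxy hne
              rcases hprime.2.2 _ _ hdvd_ew with h | h
              · rcases hprime.2.2 _ _ h with h' | h'
                · exact absurd h' hnotα
                · exact absurd h' hnotα
              · exact h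
            have hproddvd := pairset_prod_dvd
              (fun q hq => (mem_Iset.1 (Finset.mem_of_mem_erase hq)).1) hdvdgk
            have hfinal : ((X x - X y : Pol n) * (X x - X y)
                * ∏ q ∈ (Iset w).erase (x, y), (X q.1 - X q.2 : Pol n)) ∣ e w := by
              rw [hew2]
              exact mul_dvd_mul_left _ hproddvd
            have hcarde : ((Iset w).erase (x, y)).card = len w - 1 := by
              rw [Finset.card_erase_of_mem hxymem, card_Iset]
            apply eq_zero_of_dvd_of_homog (N := len w + 1) ?_ (hhome w) (by omega) hfinal
            have h1 := ((isHomog_X_sub_X x y).mul (isHomog_X_sub_X x y)).mul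
              (pairset_prod_homog ((Iset w).erase (x, y)))
            rwa [hcarde, show 1 + 1 + (len w - 1) = len w + 1 by omega] at h1
          · -- s*v > v : the α-insert argument
            have hnotmem : (x, y) ∉ Iset v := by
              rw [Iset, Finset.mem_filter]
              rintro ⟨-, -, h2⟩
              rw [← hs] at h2
              omega
            have hdvds : ∀ q ∈ insert (x, y) (Iset v),
                (X q.1 - X q.2 : Pol n) ∣ e v := by
              intro q hq
              rcases Finset.mem_insert.1 hq with rfl | hq'
              · exact hαdvd v
              · exact hedvd q hq'
            have hsort : ∀ q ∈ insert (x, y) (Iset v), q.1 < q.2 := by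
              intro q hq
              rcases Finset.mem_insert.1 hq with rfl | hq'
              · exact hxy
              · exact (mem_Iset.1 hq').1
            have hprod := pairset_prod_dvd hsort hdvds
            have hcard : (insert (x, y) (Iset v)).card = len w + 1 := by
              rw [Finset.card_insert_of_notMem hnotmem, card_Iset, hlv]
            apply eq_zero_of_dvd_of_homog (N := len w + 1) ?_ (hhome v) (by omega) hprod
            rw [← hcard]
            exact pairset_prod_homog _
      · -- ¬ (s*w ≤ v) : all terms vanish
        have hp'v : p' v = 0 := hsupp' v hb'
        have hpv : p v = 0 := by
          apply hsupp
          intro hwv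
          exact hb' (Relation.ReflTransGen.trans hswLEw hwv)
        have hpsv : p (s * v) = 0 := by
          apply hsupp
          intro hwsv
          have hsvne := len_swap_mul_ne hxy (v := v)
          rw [← hs] at hsvne
          rcases lt_or_gt_of_ne hsvne with hsv | hsv
          · have h1 : len (s * v) < len (Equiv.swap x y * (s * v)) := by
              rw [← hs, hss]; omega
            have h2 := bruhat_step hxy h1
            rw [← hs, hss] at h2
            exact hb' (Relation.ReflTransGen.trans hswLEw
              (Relation.ReflTransGen.trans hwsv h2))
          · apply hb'
            apply lift_B hadj
            · rw [← hs]; exact hlen1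
            · rw [← hs]; exact hsv
            · exact hwsv
        rw [heform, hpv, hpsv, hp'v, pact_zero]
        ring
    intro v
    have h2 := hzero v
    rw [he] at h2
    simp only at h2
    linear_combination h2
  · -- CASE 2 : ascent
    intro hlen2
    set e : Perm (Fin n) → Pol n := fun v => dot s p v - p v with he
    have heform : ∀ v, e v = pact s (p (s * v)) - p v := by
      intro v; rw [he]; simp only [hdot]
    have hGe : GKM n e := by
      have h1 : (dot s p - p) ∈ gkmSubmodule n :=
        Submodule.sub_mem _ (GKM_dot hGp s) hGp
      exact h1
    have hhome : ∀ v, (e v).IsHomogeneous (len w) := fun v =>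
      (dot_homog hhomp s v).sub (hhomp v)
    have hαdvd : ∀ v, (X x - X y : Pol n) ∣ e v := by
      intro v
      rw [X_sub_X_dvd_iff x y hba, heform v, map_sub, killVar_pact_swap,
        hkillGKM p hGp v, sub_self]
    have hzero : ∀ v, e v = 0 := by
      apply master hGe hhome
      intro v IH' hlenv
      have hedvd : ∀ q ∈ Iset v, (X q.1 - X q.2 : Pol n) ∣ e v := by
        intro q hq
        rw [Iset, Finset.mem_filter] at hq
        have h1 := hGe v q.1 q.2 hq.2.1
        have h2 : e (Equiv.swap q.1 q.2 * v) = 0 := IH' _ hq.2.2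
        rwa [h2, sub_zero] at h1
      by_cases hbv : bruhatLE w v
      · have hveq : w = v := bruhat_eq_of_len_le hbv hlenv
        subst hveq
        have hnotmem : (x, y) ∉ Iset w := by
          rw [Iset, Finset.mem_filter]
          rintro ⟨-, -, h2⟩
          rw [← hs] at h2
          omega
        have hdvds : ∀ q ∈ insert (x, y) (Iset w),
            (X q.1 - X q.2 : Pol n) ∣ e w := by
          intro q hq
          rcases Finset.mem_insert.1 hq with rfl | hq'
          · exact hαdvd w
          · exact hedvd q hq'
        have hsort : ∀ q ∈ insert (x, y) (Iset w), q.1 < q.2 := by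
          intro q hq
          rcases Finset.mem_insert.1 hq with rfl | hq'
          · exact hxy
          · exact (mem_Iset.1 hq').1
        have hprod := pairset_prod_dvd hsort hdvds
        have hcard : (insert (x, y) (Iset w)).card = len w + 1 := by
          rw [Finset.card_insert_of_notMem hnotmem, card_Iset]
        apply eq_zero_of_dvd_of_homog (N := len w + 1) ?_ (hhome w) (by omega) hprod
        rw [← hcard]
        exact pairset_prod_homog _
      · have hpv : p v = 0 := hsupp v hbv
        have hpsv : p (s * v) = 0 := by
          apply hsupp
          intro hwsv
          have hsvne := len_swap_mul_ne hxy (v := v)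
          rw [← hs] at hsvne
          rcases lt_or_gt_of_ne hsvne with hsv | hsv
          · have h1 : len (s * v) < len (Equiv.swap x y * (s * v)) := by
              rw [← hs, hss]; omega
            have h2 := bruhat_step hxy h1
            rw [← hs, hss] at h2
            exact hbv (Relation.ReflTransGen.trans hwsv h2)
          · apply hbv
            apply lift_A hadj
            · rw [← hs]; exact hlen2
            · rw [← hs]; exact hsv
            · exact hwsv
        rw [heform, hpv, hpsv, pact_zero]
        ring
    intro v
    have h2 := hzero v
    rw [he] at h2
    simp only at h2
    linear_combination h2

end Main
/-- the dot action of a simple transposition on a Schubert class: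
if `ℓ(sᵢw) < ℓ(w)` then `sᵢ · p_w = p_w − (tᵢ − tᵢ₊₁) p_{sᵢw}`, and if
`ℓ(sᵢw) > ℓ(w)` then `sᵢ · p_w = p_w`. -/
theorem dot_action_on_schubert_class (n : ℕ) (hn : 1 ≤ n)
    (pw : Perm (Fin n) → Perm (Fin n) → Pol n)
    (hpw : ∀ w, IsCanonical w (pw w))
    (w : Perm (Fin n)) (i : ℕ) (hi : i + 1 < n) :
    (len (sT n i hi * w) < len w →
      dot (sT n i hi) (pw w)
        = pw w - (X ⟨i, by omega⟩ - X ⟨i + 1, hi⟩ : Pol n) • pw (sT n i hi * w)) ∧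
    (len w < len (sT n i hi * w) → dot (sT n i hi) (pw w) = pw w) := by
  have hmain := main_statement pw hpw w ⟨i, by omega⟩ ⟨i + 1, hi⟩ rfl
  have hsT : sT n i hi = Equiv.swap ⟨i, by omega⟩ ⟨i + 1, hi⟩ := rfl
  constructor
  · intro h1
    rw [hsT] at h1 ⊢
    funext v
    have := hmain.1 h1 v
    simp only [Pi.sub_apply, Pi.smul_apply, smul_eq_mul]
    exact this
  · intro h2
    rw [hsT] at h2 ⊢
    funext v
    exact hmain.2 h2 v
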